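/- arXiv:1711.08699 — 3 statements merged into one kernel-verified Lean document; each statement's English description precedes it below -/
import Mathlib

section
/- In a cartesian bicategory of relations, a morphism R : X ⟶ Y is an isomorphism if and only if R† is a two-sided inverse of R (i.e. R ; R† = id_X and R† ; R = id_Y); in particular, if R is an isomorphism then R⁻¹ = R†. -/
open CategoryTheory MonoidalCategory

universe v u

/-- A cartesian bicategory of relations: a poset-enriched symmetric monoidal category
in which every object carries a cocommutative comonoid `(dup, del)` and a commutative
monoid `(mrg, bng)`, compatible with the monoidal structure, satisfying the adjunction
inequalities and the Frobenius law, and such that every morphism is a lax comonoid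
homomorphism. -/
class CartesianBicatRel (C : Type u) [Category.{v} C] [MonoidalCategory C]
    [SymmetricCategory C] [∀ X Y : C, PartialOrder (X ⟶ Y)] where
  comp_mono : ∀ {X Y Z : C} {f f' : X ⟶ Y} {g g' : Y ⟶ Z},
    f ≤ f' → g ≤ g' → f ≫ g ≤ f' ≫ g'
  tensor_mono : ∀ {X X' Y Y' : C} {f f' : X ⟶ X'} {g g' : Y ⟶ Y'},
    f ≤ f' → g ≤ g' → (f ⊗ₘ g) ≤ (f' ⊗ₘ g')
  /-- comultiplication Δ -/
  dup : ∀ X : C, X ⟶ X ⊗ X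
  /-- counit ! -/
  del : ∀ X : C, X ⟶ 𝟙_ C
  /-- multiplication ∇ -/
  mrg : ∀ X : C, X ⊗ X ⟶ X
  /-- unit ? -/
  bng : ∀ X : C, 𝟙_ C ⟶ X
  dup_coassoc : ∀ X : C, dup X ≫ (dup X ▷ X) ≫ (α_ X X X).hom = dup X ≫ (X ◁ dup X)
  dup_del_left : ∀ X : C, dup X ≫ (del X ▷ X) = (λ_ X).inv
  dup_del_right : ∀ X : C, dup X ≫ (X ◁ del X) = (ρ_ X).inv
  dup_cocomm : ∀ X : C, dup X ≫ (β_ X X).hom = dup X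
  mrg_assoc : ∀ X : C, (mrg X ▷ X) ≫ mrg X = (α_ X X X).hom ≫ (X ◁ mrg X) ≫ mrg X
  mrg_bng_left : ∀ X : C, (bng X ▷ X) ≫ mrg X = (λ_ X).hom
  mrg_bng_right : ∀ X : C, (X ◁ bng X) ≫ mrg X = (ρ_ X).hom
  mrg_comm : ∀ X : C, (β_ X X).hom ≫ mrg X = mrg X
  dup_tensor : ∀ X Y : C, dup (X ⊗ Y) = (dup X ⊗ₘ dup Y) ≫ tensorμ X X Y Y
  del_tensor : ∀ X Y : C, del (X ⊗ Y) = (del X ⊗ₘ del Y) ≫ (λ_ (𝟙_ C)).hom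
  dup_unitObj : dup (𝟙_ C) = (λ_ (𝟙_ C)).inv
  del_unitObj : del (𝟙_ C) = 𝟙 (𝟙_ C)
  mrg_tensor : ∀ X Y : C, mrg (X ⊗ Y) = tensorμ X Y X Y ≫ (mrg X ⊗ₘ mrg Y)
  bng_tensor : ∀ X Y : C, bng (X ⊗ Y) = (λ_ (𝟙_ C)).inv ≫ (bng X ⊗ₘ bng Y)
  mrg_unitObj : mrg (𝟙_ C) = (λ_ (𝟙_ C)).hom
  bng_unitObj : bng (𝟙_ C) = 𝟙 (𝟙_ C)
  adj_dup_unit : ∀ X : C, 𝟙 X ≤ dup X ≫ mrg X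
  adj_dup_counit : ∀ X : C, mrg X ≫ dup X ≤ 𝟙 (X ⊗ X)
  adj_del_counit : ∀ X : C, bng X ≫ del X ≤ 𝟙 (𝟙_ C)
  adj_del_unit : ∀ X : C, 𝟙 X ≤ del X ≫ bng X
  frob_left : ∀ X : C, (dup X ▷ X) ≫ (α_ X X X).hom ≫ (X ◁ mrg X) = mrg X ≫ dup X
  frob_right : ∀ X : C, (X ◁ dup X) ≫ (α_ X X X).inv ≫ (mrg X ▷ X) = mrg X ≫ dup X
  lax_dup : ∀ {X Y : C} (R : X ⟶ Y), R ≫ dup Y ≤ dup X ≫ (R ⊗ₘ R)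
  lax_del : ∀ {X Y : C} (R : X ⟶ Y), R ≫ del Y ≤ del X

namespace CartesianBicatRel

variable {C : Type u} [Category.{v} C] [MonoidalCategory C] [SymmetricCategory C]
  [∀ X Y : C, PartialOrder (X ⟶ Y)] [CartesianBicatRel C]

/-- The dagger `R† : Y ⟶ X` of `R : X ⟶ Y`, built from the cup `η_X = ?;Δ` and
the cap `ε_Y = ∇;!`. -/
def dagger {X Y : C} (R : X ⟶ Y) : Y ⟶ X :=
  (λ_ Y).inv ≫ ((bng X ≫ dup X) ▷ Y) ≫ (α_ X X Y).hom ≫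
    (X ◁ (R ▷ Y)) ≫ (X ◁ (mrg Y ≫ del Y)) ≫ (ρ_ X).hom

/-- `R` is single-valued. -/
def SingleValued {X Y : C} (R : X ⟶ Y) : Prop := dup X ≫ (R ⊗ₘ R) ≤ R ≫ dup Y

/-- `R` is total. -/
def Total {X Y : C} (R : X ⟶ Y) : Prop := del X ≤ R ≫ del Y

/-- `R` is injective. -/
def Injective {X Y : C} (R : X ⟶ Y) : Prop := (R ⊗ₘ R) ≫ mrg Y ≤ mrg X ≫ R

/-- `R` is surjective. -/
def Surjective {X Y : C} (R : X ⟶ Y) : Prop := bng Y ≤ bng X ≫ R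

/-- A map is a single-valued and total morphism. -/
def IsMap {X Y : C} (R : X ⟶ Y) : Prop := SingleValued R ∧ Total R

/-- A comap is an injective and surjective morphism. -/
def IsComap {X Y : C} (R : X ⟶ Y) : Prop := Injective R ∧ Surjective R

end CartesianBicatRel

section Aux

variable {C : Type u} [Category.{v} C] [MonoidalCategory C] [SymmetricCategory C]
  [∀ X Y : C, PartialOrder (X ⟶ Y)] [CartesianBicatRel C]

open CartesianBicatRel

lemma whiskerLeft_mono' (Z : C) {X Y : C} {f f' : X ⟶ Y} (h : f ≤ f') : Z ◁ f ≤ Z ◁ f' := by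
  rw [← MonoidalCategory.id_tensorHom, ← MonoidalCategory.id_tensorHom]
  exact tensor_mono le_rfl h

lemma whiskerRight_mono' {X Y : C} {f f' : X ⟶ Y} (h : f ≤ f') (Z : C) : f ▷ Z ≤ f' ▷ Z := by
  rw [← MonoidalCategory.tensorHom_id, ← MonoidalCategory.tensorHom_id]
  exact tensor_mono h le_rfl

/-- Snake-like identity from Frobenius: cup then merge gives dup. -/
lemma snake' (X : C) :
    (λ_ X).inv ≫ ((bng X ≫ dup X) ▷ X) ≫ (α_ X X X).hom ≫ (X ◁ mrg X) = dup X := by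
  rw [comp_whiskerRight]
  slice_lhs 3 5 => rw [frob_left]
  slice_lhs 2 3 => rw [mrg_bng_left]
  simp

/-- Every morphism laxly commutes with merge. -/
lemma mrg_comp_le' {X Y : C} (R : X ⟶ Y) : mrg X ≫ R ≤ (R ⊗ₘ R) ≫ mrg Y := by
  have h1 : mrg X ≫ R ≤ mrg X ≫ R ≫ dup Y ≫ mrg Y := by
    have := comp_mono (le_refl R) (adj_dup_unit (C := C) Y)
    simpa using comp_mono (le_refl (mrg X)) this
  have h2 : mrg X ≫ R ≫ dup Y ≫ mrg Y ≤ mrg X ≫ (dup X ≫ (R ⊗ₘ R)) ≫ mrg Y := by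
    have := comp_mono (comp_mono (le_refl (mrg X)) (lax_dup R)) (le_refl (mrg Y))
    simpa using this
  have h3 : mrg X ≫ (dup X ≫ (R ⊗ₘ R)) ≫ mrg Y ≤ (R ⊗ₘ R) ≫ mrg Y := by
    have := comp_mono (adj_dup_counit (C := C) X) (le_refl ((R ⊗ₘ R) ≫ mrg Y))
    simpa using this
  exact le_trans h1 (le_trans h2 h3)

/-- Every morphism laxly commutes with bang. -/
lemma bng_comp_le' {X Y : C} (R : X ⟶ Y) : bng X ≫ R ≤ bng Y := by
  have h1 : bng X ≫ R ≤ bng X ≫ R ≫ del Y ≫ bng Y := by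
    have := comp_mono (le_refl R) (adj_del_unit (C := C) Y)
    simpa using comp_mono (le_refl (bng X)) this
  have h2 : bng X ≫ R ≫ del Y ≫ bng Y ≤ (bng X ≫ del X) ≫ bng Y := by
    have := comp_mono (comp_mono (le_refl (bng X)) (lax_del R)) (le_refl (bng Y))
    simpa using this
  have h3 : (bng X ≫ del X) ≫ bng Y ≤ bng Y := by
    have := comp_mono (adj_del_counit (C := C) X) (le_refl (bng Y))
    simpa using this
  exact le_trans h1 (le_trans h2 h3)

lemma comp_dagger_eq {X Y : C} (R : X ⟶ Y) :
    R ≫ dagger R = (λ_ X).inv ≫ ((bng X ≫ dup X) ▷ X) ≫ (α_ X X X).hom ≫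
      (X ◁ ((R ⊗ₘ R) ≫ mrg Y ≫ del Y)) ≫ (ρ_ X).hom := by
  rw [dagger]
  rw [← Category.assoc, leftUnitor_inv_naturality]
  slice_lhs 2 3 => rw [whisker_exchange]
  slice_lhs 3 4 => rw [associator_naturality_right]
  simp only [Category.assoc, MonoidalCategory.whiskerLeft_comp]
  congr 3
  rw [← MonoidalCategory.whiskerLeft_comp_assoc, ← tensorHom_def']

lemma dagger_comp_eq {X Y : C} (R : X ⟶ Y) :
    dagger R ≫ R = (λ_ Y).inv ≫ ((bng X ≫ dup X ≫ (R ⊗ₘ R)) ▷ Y) ≫ (α_ Y Y Y).hom ≫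
      (Y ◁ (mrg Y ≫ del Y)) ≫ (ρ_ Y).hom := by
  rw [dagger]
  simp only [Category.assoc, MonoidalCategory.whiskerLeft_comp]
  rw [← rightUnitor_naturality]
  slice_lhs 6 7 => rw [whisker_exchange]
  slice_lhs 5 6 => rw [whisker_exchange]
  slice_lhs 4 5 => rw [whisker_exchange]
  slice_lhs 3 4 => rw [← associator_naturality_left]
  slice_lhs 4 5 => rw [← associator_naturality_middle]
  rw [MonoidalCategory.tensorHom_def]
  simp only [comp_whiskerRight, Category.assoc]

lemma unit_le' {X Y : C} (R : X ⟶ Y) (hT : Total R) : 𝟙 X ≤ R ≫ dagger R := by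
  have h0 : 𝟙 X = dup X ≫ (X ◁ del X) ≫ (ρ_ X).hom := by
    rw [← Category.assoc, dup_del_right]; simp
  have h1 : 𝟙 X ≤ dup X ≫ (X ◁ (R ≫ del Y)) ≫ (ρ_ X).hom := by
    rw [h0]
    exact comp_mono le_rfl (comp_mono (whiskerLeft_mono' X hT) le_rfl)
  have h2 : dup X ≫ (X ◁ (R ≫ del Y)) ≫ (ρ_ X).hom
      = (λ_ X).inv ≫ ((bng X ≫ dup X) ▷ X) ≫ (α_ X X X).hom ≫
        (X ◁ (mrg X ≫ R ≫ del Y)) ≫ (ρ_ X).hom := by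
    conv_lhs => rw [← snake' X]
    simp only [Category.assoc, MonoidalCategory.whiskerLeft_comp]
  have h3 : (λ_ X).inv ≫ ((bng X ≫ dup X) ▷ X) ≫ (α_ X X X).hom ≫
        (X ◁ (mrg X ≫ R ≫ del Y)) ≫ (ρ_ X).hom ≤ R ≫ dagger R := by
    rw [comp_dagger_eq]
    refine comp_mono le_rfl (comp_mono le_rfl (comp_mono le_rfl (comp_mono ?_ le_rfl)))
    refine whiskerLeft_mono' X ?_
    have : (mrg X ≫ R) ≫ del Y ≤ ((R ⊗ₘ R) ≫ mrg Y) ≫ del Y :=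
      comp_mono (mrg_comp_le' R) le_rfl
    simpa using this
  calc 𝟙 X ≤ dup X ≫ (X ◁ (R ≫ del Y)) ≫ (ρ_ X).hom := h1
    _ = _ := h2
    _ ≤ R ≫ dagger R := h3

lemma counit_le' {X Y : C} (R : X ⟶ Y) (hSV : SingleValued R) : dagger R ≫ R ≤ 𝟙 Y := by
  rw [dagger_comp_eq]
  have hη : bng X ≫ dup X ≫ (R ⊗ₘ R) ≤ bng Y ≫ dup Y := by
    have h1 : bng X ≫ dup X ≫ (R ⊗ₘ R) ≤ bng X ≫ R ≫ dup Y := comp_mono le_rfl hSV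
    have h2 : bng X ≫ R ≫ dup Y ≤ bng Y ≫ dup Y := by
      have := comp_mono (bng_comp_le' R) (le_refl (dup Y))
      simpa using this
    exact le_trans h1 h2
  have step : (λ_ Y).inv ≫ ((bng X ≫ dup X ≫ (R ⊗ₘ R)) ▷ Y) ≫ (α_ Y Y Y).hom ≫
      (Y ◁ (mrg Y ≫ del Y)) ≫ (ρ_ Y).hom ≤
      (λ_ Y).inv ≫ ((bng Y ≫ dup Y) ▷ Y) ≫ (α_ Y Y Y).hom ≫
      (Y ◁ (mrg Y ≫ del Y)) ≫ (ρ_ Y).hom :=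
    comp_mono le_rfl (comp_mono (whiskerRight_mono' hη Y) le_rfl)
  refine le_trans step (le_of_eq ?_)
  rw [MonoidalCategory.whiskerLeft_comp]
  simp only [Category.assoc]
  slice_lhs 1 4 => rw [snake' Y]
  slice_lhs 1 2 => rw [dup_del_right]
  simp

lemma dagger_eq_inv {X Y : C} (R : X ⟶ Y) [IsIso R] : dagger R = inv R := by
  have hT : Total R := by
    have h : inv R ≫ del X ≤ del Y := lax_del (inv R)
    have h2 := comp_mono (le_refl R) h
    show del X ≤ R ≫ del Y
    simpa using h2
  have hSV : SingleValued R := by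
    have h : inv R ≫ dup X ≤ dup Y ≫ (inv R ⊗ₘ inv R) := lax_dup (inv R)
    have h2 : (R ≫ inv R ≫ dup X) ≫ (R ⊗ₘ R) ≤ (R ≫ dup Y ≫ (inv R ⊗ₘ inv R)) ≫ (R ⊗ₘ R) :=
      comp_mono (comp_mono (le_refl R) h) le_rfl
    have e1 : (R ≫ inv R ≫ dup X) ≫ (R ⊗ₘ R) = dup X ≫ (R ⊗ₘ R) := by
      simp
    have e2 : (R ≫ dup Y ≫ (inv R ⊗ₘ inv R)) ≫ (R ⊗ₘ R) = R ≫ dup Y := by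
      simp only [Category.assoc, MonoidalCategory.tensorHom_comp_tensorHom, IsIso.inv_hom_id]
      simp
    rw [e1, e2] at h2
    exact h2
  have hu := unit_le' R hT
  have hc := counit_le' R hSV
  refine le_antisymm ?_ ?_
  · have := comp_mono hc (le_refl (inv R))
    simpa using this
  · have := comp_mono (le_refl (inv R)) hu
    simpa using this

end Aux

open CartesianBicatRel in
/-- `R` is an isomorphism iff `R†` is a two-sided inverse of `R`; in particular the inverse
of an isomorphism is its dagger. -/
theorem iso_iff_dagger_inverse {C : Type u} [Category.{v} C] [MonoidalCategory C]
    [SymmetricCategory C] [∀ X Y : C, PartialOrder (X ⟶ Y)] [CartesianBicatRel C]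
    {X Y : C} (R : X ⟶ Y) :
    (IsIso R ↔ (R ≫ dagger R = 𝟙 X ∧ dagger R ≫ R = 𝟙 Y)) ∧
    (∀ _ : IsIso R, inv R = dagger R) := by
  constructor
  · constructor
    · intro hIso
      have h := dagger_eq_inv R
      constructor
      · rw [h]; simp
      · rw [h]; simp
    · rintro ⟨h1, h2⟩
      exact ⟨dagger R, h1, h2⟩
  · intro hIso
    exact (dagger_eq_inv R).symm
end

section
/- In a cartesian bicategory of relations, a morphism R : X ⟶ Y is a comap (injective and surjective) if and only if it has a left adjoint, i.e. there exists S : Y ⟶ X with id_Y ≤ S ; R and R ; S ≤ id_X; and in that case S = R†. -/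
open CategoryTheory MonoidalCategory

universe v u

namespace CartesianBicatRel

section Aux

variable {C : Type u} [Category.{v} C] [MonoidalCategory C] [SymmetricCategory C]
  [∀ X Y : C, PartialOrder (X ⟶ Y)] [CartesianBicatRel C]

lemma wl_mono {X : C} {Y Z : C} {f g : Y ⟶ Z} (h : f ≤ g) : (X ◁ f) ≤ (X ◁ g) := by
  simpa only [id_tensorHom] using tensor_mono (le_refl (𝟙 X)) h

lemma wr_mono {Y Z : C} {f g : Y ⟶ Z} (h : f ≤ g) (X : C) : (f ▷ X) ≤ (g ▷ X) := by
  simpa only [tensorHom_id] using tensor_mono h (le_refl (𝟙 X))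

/-- The "yanking" / snake equation derived from Frobenius. -/
lemma yank (X : C) :
    (λ_ X).inv ≫ ((bng X ≫ dup X) ▷ X) ≫ (α_ X X X).hom ≫
      (X ◁ (mrg X ≫ del X)) ≫ (ρ_ X).hom = 𝟙 X := by
  rw [comp_whiskerRight, MonoidalCategory.whiskerLeft_comp]
  calc (λ_ X).inv ≫ (bng X ▷ X ≫ dup X ▷ X) ≫ (α_ X X X).hom ≫
        (X ◁ mrg X ≫ X ◁ del X) ≫ (ρ_ X).hom
      = (λ_ X).inv ≫ bng X ▷ X ≫ (dup X ▷ X ≫ (α_ X X X).hom ≫ X ◁ mrg X) ≫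
          X ◁ del X ≫ (ρ_ X).hom := by simp only [Category.assoc]
    _ = (λ_ X).inv ≫ bng X ▷ X ≫ (mrg X ≫ dup X) ≫ X ◁ del X ≫ (ρ_ X).hom := by
        rw [frob_left]
    _ = (λ_ X).inv ≫ (bng X ▷ X ≫ mrg X) ≫ (dup X ≫ X ◁ del X) ≫ (ρ_ X).hom := by
        simp only [Category.assoc]
    _ = 𝟙 X := by rw [mrg_bng_left, dup_del_right]; simp

lemma comp_dagger_eq {X Y : C} (R : X ⟶ Y) :
    R ≫ dagger R = (λ_ X).inv ≫ ((bng X ≫ dup X) ▷ X) ≫ (α_ X X X).hom ≫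
      (X ◁ ((R ⊗ₘ R) ≫ mrg Y ≫ del Y)) ≫ (ρ_ X).hom := by
  rw [dagger, ← Category.assoc, leftUnitor_inv_naturality]
  simp only [Category.assoc]
  rw [whisker_exchange_assoc, associator_naturality_right_assoc]
  simp only [tensorHom_def', MonoidalCategory.whiskerLeft_comp, Category.assoc]

lemma dagger_comp_eq {X Y : C} (R : X ⟶ Y) :
    dagger R ≫ R = (λ_ Y).inv ≫ (((bng X ≫ dup X) ≫ (R ⊗ₘ R)) ▷ Y) ≫ (α_ Y Y Y).hom ≫
      (Y ◁ (mrg Y ≫ del Y)) ≫ (ρ_ Y).hom := by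
  rw [dagger]
  simp only [Category.assoc]
  rw [← rightUnitor_naturality]
  rw [whisker_exchange_assoc]
  rw [whisker_exchange_assoc]
  rw [← associator_naturality_left_assoc]
  rw [← associator_naturality_middle_assoc]
  simp only [MonoidalCategory.tensorHom_def, comp_whiskerRight, Category.assoc]

lemma eps_lax {X Y : C} {R : X ⟶ Y} (h : Injective R) :
    (R ⊗ₘ R) ≫ mrg Y ≫ del Y ≤ mrg X ≫ del X := by
  calc (R ⊗ₘ R) ≫ mrg Y ≫ del Y = ((R ⊗ₘ R) ≫ mrg Y) ≫ del Y := by simp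
    _ ≤ (mrg X ≫ R) ≫ del Y := comp_mono h le_rfl
    _ = mrg X ≫ (R ≫ del Y) := by simp
    _ ≤ mrg X ≫ del X := comp_mono le_rfl (lax_del R)

lemma eta_lax {X Y : C} {R : X ⟶ Y} (h : Surjective R) :
    bng Y ≫ dup Y ≤ (bng X ≫ dup X) ≫ (R ⊗ₘ R) := by
  calc bng Y ≫ dup Y ≤ (bng X ≫ R) ≫ dup Y := comp_mono h le_rfl
    _ = bng X ≫ (R ≫ dup Y) := by simp
    _ ≤ bng X ≫ (dup X ≫ (R ⊗ₘ R)) := comp_mono le_rfl (lax_dup R)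
    _ = (bng X ≫ dup X) ≫ (R ⊗ₘ R) := by simp

/-- Every morphism is a colax monoid homomorphism for `mrg`. -/
lemma mrg_lax {X Y : C} (U : Y ⟶ X) : mrg Y ≫ U ≤ (U ⊗ₘ U) ≫ mrg X := by
  calc mrg Y ≫ U = (mrg Y ≫ U) ≫ 𝟙 X := by simp
    _ ≤ (mrg Y ≫ U) ≫ (dup X ≫ mrg X) := comp_mono le_rfl (adj_dup_unit X)
    _ = mrg Y ≫ (U ≫ dup X) ≫ mrg X := by simp
    _ ≤ mrg Y ≫ (dup Y ≫ (U ⊗ₘ U)) ≫ mrg X :=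
        comp_mono le_rfl (comp_mono (lax_dup U) le_rfl)
    _ = (mrg Y ≫ dup Y) ≫ ((U ⊗ₘ U) ≫ mrg X) := by simp
    _ ≤ 𝟙 (Y ⊗ Y) ≫ ((U ⊗ₘ U) ≫ mrg X) := comp_mono (adj_dup_counit Y) le_rfl
    _ = (U ⊗ₘ U) ≫ mrg X := by simp

/-- Every morphism is a colax monoid homomorphism for `bng`. -/
lemma bng_lax {X Y : C} (U : Y ⟶ X) : bng Y ≫ U ≤ bng X := by
  calc bng Y ≫ U = (bng Y ≫ U) ≫ 𝟙 X := by simp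
    _ ≤ (bng Y ≫ U) ≫ (del X ≫ bng X) := comp_mono le_rfl (adj_del_unit X)
    _ = bng Y ≫ (U ≫ del X) ≫ bng X := by simp
    _ ≤ bng Y ≫ del Y ≫ bng X := comp_mono le_rfl (comp_mono (lax_del U) le_rfl)
    _ = (bng Y ≫ del Y) ≫ bng X := by simp
    _ ≤ 𝟙 (𝟙_ C) ≫ bng X := comp_mono (adj_del_counit Y) le_rfl
    _ = bng X := by simp

lemma comap_dagger_counit {X Y : C} {R : X ⟶ Y} (h : Injective R) :
    R ≫ dagger R ≤ 𝟙 X := by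
  rw [comp_dagger_eq]
  calc (λ_ X).inv ≫ ((bng X ≫ dup X) ▷ X) ≫ (α_ X X X).hom ≫
        (X ◁ ((R ⊗ₘ R) ≫ mrg Y ≫ del Y)) ≫ (ρ_ X).hom
      ≤ (λ_ X).inv ≫ ((bng X ≫ dup X) ▷ X) ≫ (α_ X X X).hom ≫
        (X ◁ (mrg X ≫ del X)) ≫ (ρ_ X).hom :=
        comp_mono le_rfl (comp_mono le_rfl (comp_mono le_rfl
          (comp_mono (wl_mono (eps_lax h)) le_rfl)))
    _ = 𝟙 X := yank X

lemma comap_dagger_unit {X Y : C} {R : X ⟶ Y} (h : Surjective R) :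
    𝟙 Y ≤ dagger R ≫ R := by
  rw [dagger_comp_eq]
  calc 𝟙 Y = (λ_ Y).inv ≫ ((bng Y ≫ dup Y) ▷ Y) ≫ (α_ Y Y Y).hom ≫
        (Y ◁ (mrg Y ≫ del Y)) ≫ (ρ_ Y).hom := (yank Y).symm
    _ ≤ (λ_ Y).inv ≫ (((bng X ≫ dup X) ≫ (R ⊗ₘ R)) ▷ Y) ≫ (α_ Y Y Y).hom ≫
        (Y ◁ (mrg Y ≫ del Y)) ≫ (ρ_ Y).hom :=
        comp_mono le_rfl (comp_mono (wr_mono (eta_lax h) Y) le_rfl)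

lemma adjoint_injective {X Y : C} {R : X ⟶ Y} {S : Y ⟶ X}
    (h1 : 𝟙 Y ≤ S ≫ R) (h2 : R ≫ S ≤ 𝟙 X) : Injective R := by
  unfold Injective
  calc (R ⊗ₘ R) ≫ mrg Y = ((R ⊗ₘ R) ≫ mrg Y) ≫ 𝟙 Y := by simp
    _ ≤ ((R ⊗ₘ R) ≫ mrg Y) ≫ (S ≫ R) := comp_mono le_rfl h1
    _ = (R ⊗ₘ R) ≫ (mrg Y ≫ S) ≫ R := by simp
    _ ≤ (R ⊗ₘ R) ≫ ((S ⊗ₘ S) ≫ mrg X) ≫ R := comp_mono le_rfl (comp_mono (mrg_lax S) le_rfl)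
    _ = ((R ≫ S) ⊗ₘ (R ≫ S)) ≫ mrg X ≫ R := by
        rw [← MonoidalCategory.tensorHom_comp_tensorHom]; simp only [Category.assoc]
    _ ≤ (𝟙 X ⊗ₘ 𝟙 X) ≫ mrg X ≫ R := comp_mono (tensor_mono h2 h2) le_rfl
    _ = mrg X ≫ R := by simp [MonoidalCategory.id_tensorHom_id]

lemma adjoint_surjective {X Y : C} {R : X ⟶ Y} {S : Y ⟶ X}
    (h1 : 𝟙 Y ≤ S ≫ R) : Surjective R := by
  unfold Surjective
  calc bng Y = bng Y ≫ 𝟙 Y := by simp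
    _ ≤ bng Y ≫ (S ≫ R) := comp_mono le_rfl h1
    _ = (bng Y ≫ S) ≫ R := by simp
    _ ≤ bng X ≫ R := comp_mono (bng_lax S) le_rfl

end Aux

end CartesianBicatRel

open CartesianBicatRel in
/-- `R` is a comap iff it has a left adjoint, and in that case the left adjoint is `R†`. -/
theorem comap_iff_left_adjoint {C : Type u} [Category.{v} C] [MonoidalCategory C]
    [SymmetricCategory C] [∀ X Y : C, PartialOrder (X ⟶ Y)] [CartesianBicatRel C]
    {X Y : C} (R : X ⟶ Y) :
    (IsComap R ↔ ∃ S : Y ⟶ X, 𝟙 Y ≤ S ≫ R ∧ R ≫ S ≤ 𝟙 X) ∧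
    (∀ S : Y ⟶ X, 𝟙 Y ≤ S ≫ R → R ≫ S ≤ 𝟙 X → S = dagger R) := by
  constructor
  · constructor
    · rintro ⟨hinj, hsur⟩
      exact ⟨dagger R, comap_dagger_unit hsur, comap_dagger_counit hinj⟩
    · rintro ⟨S, h1, h2⟩
      exact ⟨adjoint_injective h1 h2, adjoint_surjective h1⟩
  · intro S h1 h2
    have hinj : CartesianBicatRel.Injective R := adjoint_injective h1 h2
    have hsur : CartesianBicatRel.Surjective R := adjoint_surjective h1
    have d1 : 𝟙 Y ≤ dagger R ≫ R := comap_dagger_unit hsur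
    have d2 : R ≫ dagger R ≤ 𝟙 X := comap_dagger_counit hinj
    apply le_antisymm
    · calc S = 𝟙 Y ≫ S := by simp
        _ ≤ (dagger R ≫ R) ≫ S := comp_mono d1 le_rfl
        _ = dagger R ≫ (R ≫ S) := by simp
        _ ≤ dagger R ≫ 𝟙 X := comp_mono le_rfl h2
        _ = dagger R := by simp
    · calc dagger R = 𝟙 Y ≫ dagger R := by simp
        _ ≤ (S ≫ R) ≫ dagger R := comp_mono h1 le_rfl
        _ = S ≫ (R ≫ dagger R) := by simp
        _ ≤ S ≫ 𝟙 X := comp_mono le_rfl d2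
        _ = S := by simp
end

section
/- In a cartesian bicategory of relations, the maps form a cartesian category: identities are maps, composites of maps are maps, and for objects M, N with projections π₁ : M⊗N ⟶ M given by (id_M ⊗ !_N) followed by the right unitor and π₂ : M⊗N ⟶ N given by (!_M ⊗ id_N) followed by the left unitor, the following holds: for all maps f : K ⟶ M and g : K ⟶ N, the pairing h := Δ_K ; (f ⊗ g) is a map with h ; π₁ = f and h ; π₂ = g, and h is the unique map with these two properties. Hence M⊗N, with π₁ and π₂, is a categorical product of M and N in the subcategory Map(C) of maps. -/
open CategoryTheory MonoidalCategory

universe v u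

section MapsCartesianAux

open CartesianBicatRel

variable {C : Type u} [Category.{v} C] [MonoidalCategory C] [SymmetricCategory C]
  [∀ X Y : C, PartialOrder (X ⟶ Y)] [CartesianBicatRel C]

private lemma cbr_total_del {X Y : C} {g : X ⟶ Y} (hg : Total g) : g ≫ del Y = del X :=
  le_antisymm (lax_del g) hg

private lemma cbr_dup_coassoc_inv (X : C) :
    dup X ≫ (X ◁ dup X) ≫ (α_ X X X).inv = dup X ≫ (dup X ▷ X) := by
  rw [← Category.assoc, ← dup_coassoc]; simp

/-- `Δ ; (Δ ⊗ₘ Δ)` lands in the normal form `Δ;(X ◁ Δ);(X ◁ (X ◁ Δ));α⁻¹`. -/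
private lemma cbr_dup3_norm (X : C) :
    dup X ≫ (dup X ⊗ₘ dup X) =
      dup X ≫ (X ◁ dup X) ≫ (X ◁ (X ◁ dup X)) ≫ (α_ X X (X ⊗ X)).inv := by
  rw [MonoidalCategory.tensorHom_def]
  calc dup X ≫ (dup X ▷ X ≫ (X ⊗ X) ◁ dup X)
      = (dup X ≫ (X ◁ dup X) ≫ (α_ X X X).inv) ≫ (X ⊗ X) ◁ dup X := by
        rw [cbr_dup_coassoc_inv]; simp
    _ = dup X ≫ (X ◁ dup X) ≫ (X ◁ (X ◁ dup X)) ≫ (α_ X X (X ⊗ X)).inv := by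
        simp only [Category.assoc, associator_inv_naturality_right]

/-- Cocommutativity of the triple copy: `Δ;(Δ⊗ₘΔ);tensorμ = Δ;(Δ⊗ₘΔ)`. -/
private lemma cbr_dup_dup_tensorμ (X : C) :
    dup X ≫ (dup X ⊗ₘ dup X) ≫ tensorμ X X X X = dup X ≫ (dup X ⊗ₘ dup X) := by
  have hθ : dup X ≫ ((X ◁ dup X) ≫ (α_ X X X).inv ≫ ((β_ X X).hom ▷ X) ≫ (α_ X X X).hom)
      = dup X ≫ (X ◁ dup X) := by
    calc dup X ≫ ((X ◁ dup X) ≫ (α_ X X X).inv ≫ ((β_ X X).hom ▷ X) ≫ (α_ X X X).hom)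
        = (dup X ≫ (X ◁ dup X) ≫ (α_ X X X).inv) ≫ ((β_ X X).hom ▷ X) ≫ (α_ X X X).hom := by
          simp only [Category.assoc]
      _ = dup X ≫ ((dup X ≫ (β_ X X).hom) ▷ X) ≫ (α_ X X X).hom := by
          rw [cbr_dup_coassoc_inv]; simp only [comp_whiskerRight, Category.assoc]
      _ = dup X ≫ (dup X ▷ X) ≫ (α_ X X X).hom := by rw [dup_cocomm]
      _ = dup X ≫ (X ◁ dup X) := dup_coassoc X
  calc dup X ≫ (dup X ⊗ₘ dup X) ≫ tensorμ X X X X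
      = dup X ≫ ((dup X ▷ X) ≫ ((X ⊗ X) ◁ dup X) ≫ (α_ X X (X ⊗ X)).hom) ≫
          (X ◁ (α_ X X X).inv) ≫ (X ◁ ((β_ X X).hom ▷ X)) ≫ (X ◁ (α_ X X X).hom) ≫
          (α_ X X (X ⊗ X)).inv := by
        rw [MonoidalCategory.tensorHom_def]; dsimp only [tensorμ]; simp only [Category.assoc]
    _ = (dup X ≫ (dup X ▷ X) ≫ (α_ X X X).hom) ≫ (X ◁ (X ◁ dup X)) ≫
          (X ◁ (α_ X X X).inv) ≫ (X ◁ ((β_ X X).hom ▷ X)) ≫ (X ◁ (α_ X X X).hom) ≫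
          (α_ X X (X ⊗ X)).inv := by
        rw [associator_naturality_right]; simp only [Category.assoc]
    _ = dup X ≫ (X ◁ dup X) ≫
          (X ◁ ((X ◁ dup X) ≫ (α_ X X X).inv ≫ ((β_ X X).hom ▷ X) ≫ (α_ X X X).hom)) ≫
          (α_ X X (X ⊗ X)).inv := by
        rw [dup_coassoc]
        simp only [MonoidalCategory.whiskerLeft_comp, Category.assoc]
    _ = dup X ≫ (X ◁ (dup X ≫ (X ◁ dup X) ≫ (α_ X X X).inv ≫ ((β_ X X).hom ▷ X) ≫
          (α_ X X X).hom)) ≫ (α_ X X (X ⊗ X)).inv := by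
        simp only [MonoidalCategory.whiskerLeft_comp, Category.assoc]
    _ = dup X ≫ (X ◁ (dup X ≫ (X ◁ dup X))) ≫ (α_ X X (X ⊗ X)).inv := by
        have := hθ; rw [this]
    _ = dup X ≫ (dup X ⊗ₘ dup X) := by
        rw [cbr_dup3_norm]
        simp only [MonoidalCategory.whiskerLeft_comp, Category.assoc]

/-- Copying then deleting both copies equals deleting, up to the unitor. -/
private lemma cbr_dup_del_del (X : C) :
    dup X ≫ (del X ⊗ₘ del X) = del X ≫ (λ_ (𝟙_ C)).inv := by
  rw [MonoidalCategory.tensorHom_def]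
  calc dup X ≫ ((del X ▷ X) ≫ (𝟙_ C ◁ del X))
      = (dup X ≫ (del X ▷ X)) ≫ (𝟙_ C ◁ del X) := by simp only [Category.assoc]
    _ = (λ_ X).inv ≫ (𝟙_ C ◁ del X) := by rw [dup_del_left]
    _ = del X ≫ (λ_ (𝟙_ C)).inv := by rw [← leftUnitor_inv_naturality]

private lemma cbr_struct (M N : C) :
    ((ρ_ M).inv ⊗ₘ (λ_ N).inv) ≫ tensorμ M (𝟙_ C) (𝟙_ C) N ≫ ((ρ_ M).hom ⊗ₘ (λ_ N).hom) =
      𝟙 (M ⊗ N) := by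
  have hβ : (β_ (𝟙_ C) (𝟙_ C)).hom = (λ_ (𝟙_ C)).hom ≫ (ρ_ (𝟙_ C)).inv := by
    rw [← braiding_rightUnitor (𝟙_ C)]; simp
  dsimp only [tensorμ]
  rw [hβ]
  monoidal

/-- First projection applied after the pairing. -/
private lemma cbr_pair_fst {K M N : C} (f : K ⟶ M) (g : K ⟶ N) (hg : Total g) :
    (dup K ≫ (f ⊗ₘ g)) ≫ ((𝟙 M ⊗ₘ del N) ≫ (ρ_ M).hom) = f := by
  have h1 : (f ⊗ₘ g) ≫ (𝟙 M ⊗ₘ del N) = f ⊗ₘ del K := by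
    rw [tensorHom_comp_tensorHom, Category.comp_id, cbr_total_del hg]
  calc (dup K ≫ (f ⊗ₘ g)) ≫ ((𝟙 M ⊗ₘ del N) ≫ (ρ_ M).hom)
      = dup K ≫ ((f ⊗ₘ g) ≫ (𝟙 M ⊗ₘ del N)) ≫ (ρ_ M).hom := by simp only [Category.assoc]
    _ = dup K ≫ (f ⊗ₘ del K) ≫ (ρ_ M).hom := by rw [h1]
    _ = dup K ≫ (K ◁ del K) ≫ (f ▷ 𝟙_ C) ≫ (ρ_ M).hom := by
        rw [tensorHom_def']; simp only [Category.assoc]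
    _ = dup K ≫ (K ◁ del K) ≫ (ρ_ K).hom ≫ f := by rw [rightUnitor_naturality]
    _ = ((ρ_ K).inv ≫ (ρ_ K).hom) ≫ f := by
        rw [← Category.assoc, dup_del_right]; simp only [Category.assoc]
    _ = f := by simp

/-- Second projection applied after the pairing. -/
private lemma cbr_pair_snd {K M N : C} (f : K ⟶ M) (g : K ⟶ N) (hf : Total f) :
    (dup K ≫ (f ⊗ₘ g)) ≫ ((del M ⊗ₘ 𝟙 N) ≫ (λ_ N).hom) = g := by
  have h1 : (f ⊗ₘ g) ≫ (del M ⊗ₘ 𝟙 N) = del K ⊗ₘ g := by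
    rw [tensorHom_comp_tensorHom, Category.comp_id, cbr_total_del hf]
  calc (dup K ≫ (f ⊗ₘ g)) ≫ ((del M ⊗ₘ 𝟙 N) ≫ (λ_ N).hom)
      = dup K ≫ ((f ⊗ₘ g) ≫ (del M ⊗ₘ 𝟙 N)) ≫ (λ_ N).hom := by simp only [Category.assoc]
    _ = dup K ≫ (del K ⊗ₘ g) ≫ (λ_ N).hom := by rw [h1]
    _ = dup K ≫ (del K ▷ K) ≫ (𝟙_ C ◁ g) ≫ (λ_ N).hom := by
        rw [MonoidalCategory.tensorHom_def]; simp only [Category.assoc]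
    _ = dup K ≫ (del K ▷ K) ≫ (λ_ K).hom ≫ g := by rw [leftUnitor_naturality]
    _ = ((λ_ K).inv ≫ (λ_ K).hom) ≫ g := by
        rw [← Category.assoc, dup_del_left]; simp only [Category.assoc]
    _ = g := by simp

/-- The copy of `M ⊗ N` followed by the two projections is the identity. -/
private lemma cbr_proj_pair_id (M N : C) :
    dup (M ⊗ N) ≫ (((𝟙 M ⊗ₘ del N) ≫ (ρ_ M).hom) ⊗ₘ ((del M ⊗ₘ 𝟙 N) ≫ (λ_ N).hom)) =
      𝟙 (M ⊗ N) := by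
  rw [dup_tensor]
  simp only [Category.assoc]
  calc (dup M ⊗ₘ dup N) ≫ tensorμ M M N N ≫
        (((𝟙 M ⊗ₘ del N) ≫ (ρ_ M).hom) ⊗ₘ ((del M ⊗ₘ 𝟙 N) ≫ (λ_ N).hom))
      = (dup M ⊗ₘ dup N) ≫ (tensorμ M M N N ≫ ((𝟙 M ⊗ₘ del N) ⊗ₘ (del M ⊗ₘ 𝟙 N))) ≫
          ((ρ_ M).hom ⊗ₘ (λ_ N).hom) := by
        rw [← tensorHom_comp_tensorHom]; simp only [Category.assoc]
    _ = (dup M ⊗ₘ dup N) ≫ (((𝟙 M ⊗ₘ del M) ⊗ₘ (del N ⊗ₘ 𝟙 N)) ≫ tensorμ M (𝟙_ C) (𝟙_ C) N) ≫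
          ((ρ_ M).hom ⊗ₘ (λ_ N).hom) := by
        rw [← tensorμ_natural (𝟙 M) (del M) (del N) (𝟙 N)]
    _ = ((dup M ≫ (𝟙 M ⊗ₘ del M)) ⊗ₘ (dup N ≫ (del N ⊗ₘ 𝟙 N))) ≫ tensorμ M (𝟙_ C) (𝟙_ C) N ≫
          ((ρ_ M).hom ⊗ₘ (λ_ N).hom) := by
        rw [← tensorHom_comp_tensorHom]; simp only [Category.assoc]
    _ = ((ρ_ M).inv ⊗ₘ (λ_ N).inv) ≫ tensorμ M (𝟙_ C) (𝟙_ C) N ≫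
          ((ρ_ M).hom ⊗ₘ (λ_ N).hom) := by
        rw [id_tensorHom, tensorHom_id, dup_del_right, dup_del_left]
    _ = 𝟙 (M ⊗ N) := cbr_struct M N

/-- Single-valuedness (as an equality) of the first projection. -/
private lemma cbr_proj1_sv (M N : C) :
    dup (M ⊗ N) ≫ (((𝟙 M ⊗ₘ del N) ≫ (ρ_ M).hom) ⊗ₘ ((𝟙 M ⊗ₘ del N) ≫ (ρ_ M).hom)) =
      ((𝟙 M ⊗ₘ del N) ≫ (ρ_ M).hom) ≫ dup M := by
  rw [dup_tensor, id_tensorHom]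
  simp only [Category.assoc]
  calc (dup M ⊗ₘ dup N) ≫ tensorμ M M N N ≫
        ((M ◁ del N ≫ (ρ_ M).hom) ⊗ₘ (M ◁ del N ≫ (ρ_ M).hom))
      = (dup M ⊗ₘ dup N) ≫ (tensorμ M M N N ≫ (M ◁ del N ⊗ₘ M ◁ del N)) ≫
          ((ρ_ M).hom ⊗ₘ (ρ_ M).hom) := by
        rw [← tensorHom_comp_tensorHom]; simp only [Category.assoc]
    _ = (dup M ⊗ₘ dup N) ≫ (((M ⊗ M) ◁ (del N ⊗ₘ del N)) ≫ tensorμ M M (𝟙_ C) (𝟙_ C)) ≫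
          ((ρ_ M).hom ⊗ₘ (ρ_ M).hom) := by
        rw [← tensorμ_natural_right M M (del N) (del N)]
    _ = ((dup M ≫ 𝟙 (M ⊗ M)) ⊗ₘ (dup N ≫ (del N ⊗ₘ del N))) ≫ tensorμ M M (𝟙_ C) (𝟙_ C) ≫
          ((ρ_ M).hom ⊗ₘ (ρ_ M).hom) := by
        rw [← tensorHom_comp_tensorHom]; simp only [id_tensorHom, Category.assoc]
    _ = (dup M ⊗ₘ (del N ≫ (λ_ (𝟙_ C)).inv)) ≫ tensorμ M M (𝟙_ C) (𝟙_ C) ≫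
          ((ρ_ M).hom ⊗ₘ (ρ_ M).hom) := by
        rw [Category.comp_id, cbr_dup_del_del]
    _ = (dup M ⊗ₘ del N) ≫ ((M ⊗ M) ◁ (λ_ (𝟙_ C)).inv) ≫ tensorμ M M (𝟙_ C) (𝟙_ C) ≫
          ((ρ_ M).hom ⊗ₘ (ρ_ M).hom) := by
        rw [MonoidalCategory.tensorHom_def, MonoidalCategory.tensorHom_def (dup M) (del N), MonoidalCategory.whiskerLeft_comp]
        simp only [Category.assoc]
    _ = (dup M ⊗ₘ del N) ≫ (ρ_ (M ⊗ M)).hom := by rw [← tensor_right_unitality]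
    _ = (M ◁ del N) ≫ (dup M ▷ 𝟙_ C) ≫ (ρ_ (M ⊗ M)).hom := by
        rw [tensorHom_def']; simp only [Category.assoc]
    _ = M ◁ del N ≫ (ρ_ M).hom ≫ dup M := by rw [rightUnitor_naturality]

/-- Single-valuedness (as an equality) of the second projection. -/
private lemma cbr_proj2_sv (M N : C) :
    dup (M ⊗ N) ≫ (((del M ⊗ₘ 𝟙 N) ≫ (λ_ N).hom) ⊗ₘ ((del M ⊗ₘ 𝟙 N) ≫ (λ_ N).hom)) =
      ((del M ⊗ₘ 𝟙 N) ≫ (λ_ N).hom) ≫ dup N := by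
  rw [dup_tensor, tensorHom_id]
  simp only [Category.assoc]
  calc (dup M ⊗ₘ dup N) ≫ tensorμ M M N N ≫
        ((del M ▷ N ≫ (λ_ N).hom) ⊗ₘ (del M ▷ N ≫ (λ_ N).hom))
      = (dup M ⊗ₘ dup N) ≫ (tensorμ M M N N ≫ (del M ▷ N ⊗ₘ del M ▷ N)) ≫
          ((λ_ N).hom ⊗ₘ (λ_ N).hom) := by
        rw [← tensorHom_comp_tensorHom]; simp only [Category.assoc]
    _ = (dup M ⊗ₘ dup N) ≫ (((del M ⊗ₘ del M) ▷ (N ⊗ N)) ≫ tensorμ (𝟙_ C) (𝟙_ C) N N) ≫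
          ((λ_ N).hom ⊗ₘ (λ_ N).hom) := by
        rw [← tensorμ_natural_left (del M) (del M) N N]
    _ = ((dup M ≫ (del M ⊗ₘ del M)) ⊗ₘ (dup N ≫ 𝟙 (N ⊗ N))) ≫ tensorμ (𝟙_ C) (𝟙_ C) N N ≫
          ((λ_ N).hom ⊗ₘ (λ_ N).hom) := by
        rw [← tensorHom_comp_tensorHom]; simp only [tensorHom_id, Category.assoc]
    _ = ((del M ≫ (λ_ (𝟙_ C)).inv) ⊗ₘ dup N) ≫ tensorμ (𝟙_ C) (𝟙_ C) N N ≫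
          ((λ_ N).hom ⊗ₘ (λ_ N).hom) := by
        rw [Category.comp_id, cbr_dup_del_del]
    _ = (del M ⊗ₘ dup N) ≫ ((λ_ (𝟙_ C)).inv ▷ (N ⊗ N)) ≫ tensorμ (𝟙_ C) (𝟙_ C) N N ≫
          ((λ_ N).hom ⊗ₘ (λ_ N).hom) := by
        rw [tensorHom_def', tensorHom_def' (del M) (dup N), comp_whiskerRight]
        simp only [Category.assoc]
    _ = (del M ⊗ₘ dup N) ≫ (λ_ (N ⊗ N)).hom := by rw [← tensor_left_unitality]
    _ = (del M ▷ N) ≫ (𝟙_ C ◁ dup N) ≫ (λ_ (N ⊗ N)).hom := by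
        rw [MonoidalCategory.tensorHom_def]; simp only [Category.assoc]
    _ = del M ▷ N ≫ (λ_ N).hom ≫ dup N := by rw [leftUnitor_naturality]

/-- Totality (as an equality) of the first projection. -/
private lemma cbr_proj1_del (M N : C) :
    ((𝟙 M ⊗ₘ del N) ≫ (ρ_ M).hom) ≫ del M = del (M ⊗ N) := by
  rw [id_tensorHom, del_tensor]
  calc (M ◁ del N ≫ (ρ_ M).hom) ≫ del M
      = (M ◁ del N) ≫ (del M ▷ 𝟙_ C) ≫ (ρ_ (𝟙_ C)).hom := by
        rw [rightUnitor_naturality]; simp only [Category.assoc]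
    _ = (del M ⊗ₘ del N) ≫ (ρ_ (𝟙_ C)).hom := by
        rw [tensorHom_def']; simp only [Category.assoc]
    _ = (del M ⊗ₘ del N) ≫ (λ_ (𝟙_ C)).hom := by rw [unitors_equal]

/-- Totality (as an equality) of the second projection. -/
private lemma cbr_proj2_del (M N : C) :
    ((del M ⊗ₘ 𝟙 N) ≫ (λ_ N).hom) ≫ del N = del (M ⊗ N) := by
  rw [tensorHom_id, del_tensor]
  calc (del M ▷ N ≫ (λ_ N).hom) ≫ del N
      = (del M ▷ N) ≫ (𝟙_ C ◁ del N) ≫ (λ_ (𝟙_ C)).hom := by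
        rw [leftUnitor_naturality]; simp only [Category.assoc]
    _ = (del M ⊗ₘ del N) ≫ (λ_ (𝟙_ C)).hom := by
        rw [MonoidalCategory.tensorHom_def]; simp only [Category.assoc]

/-- The pairing of single-valued morphisms is single-valued. -/
private lemma cbr_pair_sv {K M N : C} {f : K ⟶ M} {g : K ⟶ N}
    (hf : SingleValued f) (hg : SingleValued g) : SingleValued (dup K ≫ (f ⊗ₘ g)) := by
  show dup K ≫ ((dup K ≫ (f ⊗ₘ g)) ⊗ₘ (dup K ≫ (f ⊗ₘ g))) ≤ (dup K ≫ (f ⊗ₘ g)) ≫ dup (M ⊗ N)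
  have step1 : dup K ≫ ((dup K ≫ (f ⊗ₘ g)) ⊗ₘ (dup K ≫ (f ⊗ₘ g))) =
      dup K ≫ ((dup K ≫ (f ⊗ₘ f)) ⊗ₘ (dup K ≫ (g ⊗ₘ g))) ≫ tensorμ M M N N := by
    calc dup K ≫ ((dup K ≫ (f ⊗ₘ g)) ⊗ₘ (dup K ≫ (f ⊗ₘ g)))
        = (dup K ≫ (dup K ⊗ₘ dup K)) ≫ ((f ⊗ₘ g) ⊗ₘ (f ⊗ₘ g)) := by
          rw [← tensorHom_comp_tensorHom]; simp only [Category.assoc]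
      _ = (dup K ≫ (dup K ⊗ₘ dup K) ≫ tensorμ K K K K) ≫ ((f ⊗ₘ g) ⊗ₘ (f ⊗ₘ g)) := by
          rw [cbr_dup_dup_tensorμ]
      _ = (dup K ≫ (dup K ⊗ₘ dup K)) ≫ (tensorμ K K K K ≫ ((f ⊗ₘ g) ⊗ₘ (f ⊗ₘ g))) := by
          simp only [Category.assoc]
      _ = (dup K ≫ (dup K ⊗ₘ dup K)) ≫ (((f ⊗ₘ f) ⊗ₘ (g ⊗ₘ g)) ≫ tensorμ M M N N) := by
          rw [← tensorμ_natural f f g g]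
      _ = dup K ≫ ((dup K ⊗ₘ dup K) ≫ ((f ⊗ₘ f) ⊗ₘ (g ⊗ₘ g))) ≫ tensorμ M M N N := by
          simp only [Category.assoc]
      _ = dup K ≫ ((dup K ≫ (f ⊗ₘ f)) ⊗ₘ (dup K ≫ (g ⊗ₘ g))) ≫ tensorμ M M N N := by
          rw [tensorHom_comp_tensorHom]
  rw [step1]
  calc dup K ≫ ((dup K ≫ (f ⊗ₘ f)) ⊗ₘ (dup K ≫ (g ⊗ₘ g))) ≫ tensorμ M M N N
      ≤ dup K ≫ ((f ≫ dup M) ⊗ₘ (g ≫ dup N)) ≫ tensorμ M M N N :=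
        comp_mono le_rfl (comp_mono (tensor_mono hf hg) le_rfl)
    _ = (dup K ≫ (f ⊗ₘ g)) ≫ dup (M ⊗ N) := by
        rw [← tensorHom_comp_tensorHom, dup_tensor]; simp only [Category.assoc]

/-- The pairing of total morphisms is total. -/
private lemma cbr_pair_total {K M N : C} {f : K ⟶ M} {g : K ⟶ N}
    (hf : Total f) (hg : Total g) : Total (dup K ≫ (f ⊗ₘ g)) := by
  show del K ≤ (dup K ≫ (f ⊗ₘ g)) ≫ del (M ⊗ N)
  calc del K
      = ((λ_ K).inv ≫ (λ_ K).hom) ≫ del K := by simp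
    _ = dup K ≫ (del K ▷ K) ≫ (𝟙_ C ◁ del K) ≫ (λ_ (𝟙_ C)).hom := by
        conv_rhs => rw [← Category.assoc, dup_del_left]
        rw [leftUnitor_naturality]; simp only [Category.assoc]
    _ = dup K ≫ (del K ⊗ₘ del K) ≫ (λ_ (𝟙_ C)).hom := by
        rw [MonoidalCategory.tensorHom_def]; simp only [Category.assoc]
    _ ≤ dup K ≫ ((f ≫ del M) ⊗ₘ (g ≫ del N)) ≫ (λ_ (𝟙_ C)).hom :=
        comp_mono le_rfl (comp_mono (tensor_mono hf hg) le_rfl)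
    _ = (dup K ≫ (f ⊗ₘ g)) ≫ del (M ⊗ N) := by
        rw [← tensorHom_comp_tensorHom, del_tensor]; simp only [Category.assoc]

end MapsCartesianAux

open CartesianBicatRel in
/-- Maps form a cartesian category: identities and composites of maps are maps, the
projections are maps, and for maps `f, g` the pairing `Δ;(f⊗ₘg)` is the unique map whose
composites with the projections are `f` and `g`; hence `M ⊗ N` is a categorical product
of `M` and `N` in the subcategory of maps. -/
theorem maps_cartesian {C : Type u} [Category.{v} C] [MonoidalCategory C]
    [SymmetricCategory C] [∀ X Y : C, PartialOrder (X ⟶ Y)] [CartesianBicatRel C]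
    (M N : C) :
    (∀ X : C, IsMap (𝟙 X)) ∧
    (∀ {X Y Z : C} (f : X ⟶ Y) (g : Y ⟶ Z), IsMap f → IsMap g → IsMap (f ≫ g)) ∧
    IsMap ((𝟙 M ⊗ₘ del N) ≫ (ρ_ M).hom) ∧
    IsMap ((del M ⊗ₘ 𝟙 N) ≫ (λ_ N).hom) ∧
    (∀ {K : C} (f : K ⟶ M) (g : K ⟶ N), IsMap f → IsMap g →
      IsMap (dup K ≫ (f ⊗ₘ g)) ∧
      (dup K ≫ (f ⊗ₘ g)) ≫ ((𝟙 M ⊗ₘ del N) ≫ (ρ_ M).hom) = f ∧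
      (dup K ≫ (f ⊗ₘ g)) ≫ ((del M ⊗ₘ 𝟙 N) ≫ (λ_ N).hom) = g ∧
      (∀ h' : K ⟶ M ⊗ N, IsMap h' →
        h' ≫ ((𝟙 M ⊗ₘ del N) ≫ (ρ_ M).hom) = f →
        h' ≫ ((del M ⊗ₘ 𝟙 N) ≫ (λ_ N).hom) = g →
        h' = dup K ≫ (f ⊗ₘ g))) := by
  constructor
  · -- identities are maps
    intro X
    constructor
    · show dup X ≫ (𝟙 X ⊗ₘ 𝟙 X) ≤ 𝟙 X ≫ dup X
      simp
    · show del X ≤ 𝟙 X ≫ del X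
      simp
  constructor
  · -- composites of maps are maps
    intro X Y Z f g hf hg
    constructor
    · calc dup X ≫ ((f ≫ g) ⊗ₘ (f ≫ g))
          = (dup X ≫ (f ⊗ₘ f)) ≫ (g ⊗ₘ g) := by
            rw [← tensorHom_comp_tensorHom]; simp only [Category.assoc]
        _ ≤ (f ≫ dup Y) ≫ (g ⊗ₘ g) := comp_mono hf.1 le_rfl
        _ = f ≫ (dup Y ≫ (g ⊗ₘ g)) := by simp only [Category.assoc]
        _ ≤ f ≫ (g ≫ dup Z) := comp_mono le_rfl hg.1
        _ = (f ≫ g) ≫ dup Z := by simp only [Category.assoc]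
    · calc del X
          ≤ f ≫ del Y := hf.2
        _ ≤ f ≫ (g ≫ del Z) := comp_mono le_rfl hg.2
        _ = (f ≫ g) ≫ del Z := by simp only [Category.assoc]
  constructor
  · -- first projection is a map
    exact ⟨le_of_eq (cbr_proj1_sv M N), le_of_eq (cbr_proj1_del M N).symm⟩
  constructor
  · -- second projection is a map
    exact ⟨le_of_eq (cbr_proj2_sv M N), le_of_eq (cbr_proj2_del M N).symm⟩
  · intro K f g hf hg
    refine ⟨⟨cbr_pair_sv hf.1 hg.1, cbr_pair_total hf.2 hg.2⟩,
      cbr_pair_fst f g hg.2, cbr_pair_snd f g hf.2, ?_⟩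
    intro h' hh' h1 h2
    have key : h' ≫ dup (M ⊗ N) ≫
        (((𝟙 M ⊗ₘ del N) ≫ (ρ_ M).hom) ⊗ₘ ((del M ⊗ₘ 𝟙 N) ≫ (λ_ N).hom)) = h' := by
      rw [cbr_proj_pair_id, Category.comp_id]
    have hfg : dup K ≫ (h' ⊗ₘ h') ≫
        (((𝟙 M ⊗ₘ del N) ≫ (ρ_ M).hom) ⊗ₘ ((del M ⊗ₘ 𝟙 N) ≫ (λ_ N).hom)) =
        dup K ≫ (f ⊗ₘ g) := by
      rw [tensorHom_comp_tensorHom, h1, h2]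
    apply le_antisymm
    · -- h' ≤ pairing, using lax_dup h'
      calc h'
          = h' ≫ dup (M ⊗ N) ≫
              (((𝟙 M ⊗ₘ del N) ≫ (ρ_ M).hom) ⊗ₘ ((del M ⊗ₘ 𝟙 N) ≫ (λ_ N).hom)) := key.symm
        _ = (h' ≫ dup (M ⊗ N)) ≫
              (((𝟙 M ⊗ₘ del N) ≫ (ρ_ M).hom) ⊗ₘ ((del M ⊗ₘ 𝟙 N) ≫ (λ_ N).hom)) := by
            simp only [Category.assoc]
        _ ≤ (dup K ≫ (h' ⊗ₘ h')) ≫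
              (((𝟙 M ⊗ₘ del N) ≫ (ρ_ M).hom) ⊗ₘ ((del M ⊗ₘ 𝟙 N) ≫ (λ_ N).hom)) :=
            comp_mono (lax_dup h') le_rfl
        _ = dup K ≫ (f ⊗ₘ g) := by rw [Category.assoc, hfg]
    · -- pairing ≤ h', using single-valuedness of h'
      calc dup K ≫ (f ⊗ₘ g)
          = (dup K ≫ (h' ⊗ₘ h')) ≫
              (((𝟙 M ⊗ₘ del N) ≫ (ρ_ M).hom) ⊗ₘ ((del M ⊗ₘ 𝟙 N) ≫ (λ_ N).hom)) := by
            rw [Category.assoc, hfg]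
        _ ≤ (h' ≫ dup (M ⊗ N)) ≫
              (((𝟙 M ⊗ₘ del N) ≫ (ρ_ M).hom) ⊗ₘ ((del M ⊗ₘ 𝟙 N) ≫ (λ_ N).hom)) :=
            comp_mono hh'.1 le_rfl
        _ = h' := by rw [Category.assoc]; exact key
end
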